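/- arXiv:1507.01283 — 5 statements merged into one kernel-verified Lean document; each statement's English description precedes it below -/
import Mathlib

section
/- Let k be a field and let Φ ∈ k[x_1,…,x_n,y_1,…,y_m] be an irreducible polynomial that is bi-homogeneous of bi-degree (p,q) (i.e., homogeneous of degree p in the variables x_1,…,x_n and homogeneous of degree q in the variables y_1,…,y_m), with p+q ≥ 1. Then the polynomial Φ − 1 is irreducible in k[x_1,…,x_n,y_1,…,y_m]. -/
/-- The algebra map `R[σ] → (R[σ])[t]` sending `X i ↦ C (X i) * t`. -/
noncomputable def psiAux {σ R : Type*} [CommRing R] :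
    MvPolynomial σ R →ₐ[R] Polynomial (MvPolynomial σ R) :=
  MvPolynomial.aeval (fun i => Polynomial.C (MvPolynomial.X i) * Polynomial.X)

lemma homogeneousComponent_monomial_aux {σ R : Type*} [CommRing R] (j : ℕ) (d : σ →₀ ℕ)
    (r : R) :
    MvPolynomial.homogeneousComponent j (MvPolynomial.monomial d r) =
      if d.degree = j then MvPolynomial.monomial d r else 0 := by
  classical
  ext e
  simp only [MvPolynomial.coeff_homogeneousComponent, MvPolynomial.coeff_monomial]
  by_cases h1 : d = e
  · subst h1
    by_cases h2 : d.degree = j <;> simp [h2]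
  · by_cases h2 : d.degree = j <;> by_cases h3 : e.degree = j <;>
      simp [h2, h3, MvPolynomial.coeff_monomial, h1]

lemma psiAux_monomial {σ R : Type*} [CommRing R] (d : σ →₀ ℕ) (r : R) :
    psiAux (MvPolynomial.monomial d r) =
      Polynomial.C (MvPolynomial.monomial d r) * Polynomial.X ^ d.degree := by
  rw [psiAux, MvPolynomial.aeval_monomial]
  have h1 : (d.prod fun i k => (Polynomial.C (MvPolynomial.X i) * Polynomial.X :
      Polynomial (MvPolynomial σ R)) ^ k) =
      Polynomial.C (d.prod fun i k => (MvPolynomial.X i : MvPolynomial σ R) ^ k) *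
        Polynomial.X ^ d.degree := by
    rw [Finsupp.prod, Finsupp.prod, map_prod, Finsupp.degree_apply, ← Finset.prod_pow_eq_pow_sum,
      ← Finset.prod_mul_distrib]
    refine Finset.prod_congr rfl fun i _ => ?_
    rw [mul_pow, Polynomial.C_pow]
  rw [h1, MvPolynomial.monomial_eq, map_mul]
  have h2 : (algebraMap R (Polynomial (MvPolynomial σ R))) r =
      Polynomial.C (MvPolynomial.C r) := rfl
  rw [h2]
  ring

lemma coeff_psiAux {σ R : Type*} [CommRing R] (f : MvPolynomial σ R) (j : ℕ) :
    (psiAux f).coeff j = MvPolynomial.homogeneousComponent j f := by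
  induction f using MvPolynomial.induction_on' with
  | add f g hf hg => simp [map_add, hf, hg]
  | monomial d r =>
    rw [psiAux_monomial, Polynomial.coeff_C_mul, Polynomial.coeff_X_pow,
      homogeneousComponent_monomial_aux]
    by_cases h : d.degree = j
    · simp [h]
    · simp [h, Ne.symm h]

lemma psiAux_eval_one {σ R : Type*} [CommRing R] (f : MvPolynomial σ R) :
    (psiAux f).eval 1 = f := by
  induction f using MvPolynomial.induction_on with
  | C a => simp [psiAux]
  | add f g hf hg => simp [map_add, hf, hg]
  | mul_X f i hf =>
    have h : psiAux (f * MvPolynomial.X i) =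
        psiAux f * (Polynomial.C (MvPolynomial.X i) * Polynomial.X) := by
      rw [map_mul]
      congr 1
      rw [psiAux, MvPolynomial.aeval_X]
    rw [h]
    simp [hf]

/-- If `Φ` is an irreducible bi-homogeneous polynomial of bi-degree `(p, q)`
with `p + q ≥ 1`, in two groups of variables, then `Φ - 1` is irreducible. -/
theorem stmt_0 (k : Type*) [Field k] (n m : ℕ) (p q : ℕ) (hpq : 1 ≤ p + q)
    (Φ : MvPolynomial (Fin n ⊕ Fin m) k)
    (hx : Φ.IsWeightedHomogeneous (Sum.elim (fun _ => (1 : ℕ)) fun _ => (0 : ℕ)) p)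
    (hy : Φ.IsWeightedHomogeneous (Sum.elim (fun _ => (0 : ℕ)) fun _ => (1 : ℕ)) q)
    (hirr : Irreducible Φ) :
    Irreducible (Φ - 1) := by
  classical
  -- Φ is homogeneous of total degree p + q
  have hΦ : Φ.IsHomogeneous (p + q) := by
    intro e he
    have h1 := hx he
    have h2 := hy he
    show (Finsupp.weight 1) e = p + q
    rw [Finsupp.weight_apply, Finsupp.sum] at h1 h2 ⊢
    rw [← h1, ← h2, ← Finset.sum_add_distrib]
    refine Finset.sum_congr rfl fun i _ => ?_
    rcases i with i | i <;> simp
  have hΦ0 : Φ ≠ 0 := hirr.ne_zero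
  -- ψ(Φ - 1) = C Φ * X ^ (p+q) - 1
  have hψΦ : psiAux Φ = Polynomial.C Φ * Polynomial.X ^ (p + q) := by
    ext j
    rw [coeff_psiAux, Polynomial.coeff_C_mul, Polynomial.coeff_X_pow,
      MvPolynomial.homogeneousComponent_of_mem
        ((MvPolynomial.mem_homogeneousSubmodule _ _).mpr hΦ)]
    by_cases h : j = p + q
    · simp [h]
    · simp [h]
  have hψ : psiAux (Φ - 1) = Polynomial.C Φ * Polynomial.X ^ (p + q) - Polynomial.C 1 := by
    rw [map_sub, map_one, hψΦ, Polynomial.C_1]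
  have hnd : (psiAux (Φ - 1)).natDegree = p + q := by
    rw [hψ, Polynomial.natDegree_sub_C, Polynomial.natDegree_C_mul_X_pow _ _ hΦ0]
  have hlc : (psiAux (Φ - 1)).leadingCoeff = Φ := by
    rw [Polynomial.leadingCoeff, hnd, hψ, Polynomial.coeff_sub, Polynomial.coeff_C_mul,
      Polynomial.coeff_X_pow, if_pos rfl, Polynomial.coeff_C, if_neg (by omega)]
    ring
  -- constant coefficients
  have hc0 : MvPolynomial.constantCoeff Φ = 0 := by
    by_contra h
    have h2 := hΦ h
    rw [map_zero] at h2
    omega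
  have hcΦ1 : MvPolynomial.constantCoeff (Φ - 1) = -1 := by
    simp [hc0]
  -- key: a factor whose ψ-leading-coefficient is a unit, is itself a unit
  have key : ∀ f : MvPolynomial (Fin n ⊕ Fin m) k, MvPolynomial.constantCoeff f ≠ 0 →
      IsUnit (psiAux f).leadingCoeff → IsUnit f := by
    intro f hf hu
    set N := (psiAux f).natDegree with hN
    have hcomp : (psiAux f).leadingCoeff = MvPolynomial.homogeneousComponent N f := by
      rw [Polynomial.leadingCoeff, coeff_psiAux]
    have hhom : (MvPolynomial.homogeneousComponent N f).IsHomogeneous N :=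
      MvPolynomial.homogeneousComponent_isHomogeneous N f
    have hcc : MvPolynomial.constantCoeff (MvPolynomial.homogeneousComponent N f) ≠ 0 := by
      rw [hcomp] at hu
      obtain ⟨u, huu⟩ := hu
      intro h0
      have h1 : MvPolynomial.homogeneousComponent N f * (↑u⁻¹ : MvPolynomial _ k) = 1 := by
        rw [← huu]; exact u.mul_inv
      have h2 := congrArg MvPolynomial.constantCoeff h1
      rw [map_mul, map_one, h0, zero_mul] at h2
      exact zero_ne_one h2
    have hN0 : N = 0 := by
      have h3 := hhom hcc
      rwa [map_zero, eq_comm] at h3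
    have hdeg0 : (psiAux f).natDegree = 0 := by rw [← hN]; exact hN0
    have hfeq : f = MvPolynomial.C (MvPolynomial.constantCoeff f) := by
      have h4 := psiAux_eval_one f
      rw [Polynomial.eq_C_of_natDegree_eq_zero hdeg0] at h4
      rw [coeff_psiAux, MvPolynomial.homogeneousComponent_zero] at h4
      simp only [Polynomial.eval_C] at h4
      exact h4.symm
    rw [hfeq]
    exact (isUnit_iff_ne_zero.mpr hf).map MvPolynomial.C
  constructor
  · -- Φ - 1 is not a unit
    intro hu
    have h5 := Polynomial.natDegree_eq_zero_of_isUnit (hu.map psiAux)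
    omega
  · intro f g hfg
    have hψfg : psiAux (Φ - 1) = psiAux f * psiAux g := by rw [hfg, map_mul]
    have hlcfg : (psiAux f).leadingCoeff * (psiAux g).leadingCoeff = Φ := by
      rw [← Polynomial.leadingCoeff_mul, ← hψfg, hlc]
    have hccfg : MvPolynomial.constantCoeff f * MvPolynomial.constantCoeff g = -1 := by
      rw [← map_mul, ← hfg, hcΦ1]
    have hcf : MvPolynomial.constantCoeff f ≠ 0 := by
      intro h; rw [h, zero_mul] at hccfg; exact (by norm_num : (0 : k) ≠ -1) hccfg
    have hcg : MvPolynomial.constantCoeff g ≠ 0 := by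
      intro h; rw [h, mul_zero] at hccfg; exact (by norm_num : (0 : k) ≠ -1) hccfg
    rcases hirr.isUnit_or_isUnit hlcfg.symm with h | h
    · exact Or.inl (key f hcf h)
    · exact Or.inr (key g hcg h)
end

section
/- Let m ≥ 1 and r ≥ 1 be integers and let n_1, …, n_r be positive integers. Then the number of r-tuples (x_1, …, x_r) ∈ (ℤ/mℤ)^r satisfying the linear equation n_1·x_1 + n_2·x_2 + ⋯ + n_r·x_r = 0 in ℤ/mℤ equals m^{r−1} · gcd(m, n_1, n_2, …, n_r). -/
/-- the number of solutions `(x₁, …, x_r) ∈ (ℤ/mℤ)^r` of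
`n₁x₁ + ⋯ + n_r x_r = 0` is `m^{r-1} · gcd(m, n₁, …, n_r)`. -/
theorem stmt_8 (m : ℕ) (hm : 1 ≤ m) (r : ℕ) (hr : 1 ≤ r)
    (n : Fin r → ℕ) (hn : ∀ i, 1 ≤ n i) :
    Nat.card {x : Fin r → ZMod m // ∑ i, (n i : ZMod m) * x i = 0} =
      m ^ (r - 1) * Nat.gcd m (Finset.univ.gcd n) := by
  have hm0 : m ≠ 0 := by omega
  haveI : NeZero m := ⟨hm0⟩
  set g : ℕ := Finset.univ.gcd n with hg
  set d : ℕ := Nat.gcd m g with hd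
  have hdm : d ∣ m := Nat.gcd_dvd_left m g
  -- the homomorphism
  let f : (Fin r → ZMod m) →+ ZMod m :=
    AddMonoidHom.mk' (fun x => ∑ i, (n i : ZMod m) * x i)
      (by intro x y; simp [mul_add, Finset.sum_add_distrib])
  have hf : ∀ x, f x = ∑ i, (n i : ZMod m) * x i := fun _ => rfl
  -- auxiliary: any ring multiple of a is a zmultiple
  have hmul : ∀ a y : ZMod m, y * a ∈ AddSubgroup.zmultiples a := by
    intro a y
    refine ⟨(y.val : ℤ), ?_⟩
    change ((y.val : ℤ)) • a = y * a
    rw [zsmul_eq_mul]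
    push_cast
    rw [ZMod.natCast_val, ZMod.cast_id]
  -- range = zmultiples g
  have hrange : f.range = AddSubgroup.zmultiples ((g : ZMod m)) := by
    apply le_antisymm
    · rintro _ ⟨x, rfl⟩
      rw [hf]
      apply AddSubgroup.sum_mem
      intro i _
      obtain ⟨k, hk⟩ : g ∣ n i := Finset.gcd_dvd (Finset.mem_univ i)
      have h2 : (n i : ZMod m) * x i = ((k : ZMod m) * x i) * (g : ZMod m) := by
        rw [hk]; push_cast; ring
      rw [h2]
      exact hmul _ _
    · rw [AddSubgroup.zmultiples_le]
      -- g is in the range: by induction on finsets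
      have key : ∀ s : Finset (Fin r), ∃ x : Fin r → ZMod m,
          ∑ i ∈ s, (n i : ZMod m) * x i = ((s.gcd n : ℕ) : ZMod m) := by
        intro s
        induction s using Finset.induction_on with
        | empty => exact ⟨0, by simp⟩
        | @insert a s ha ih =>
          obtain ⟨x, hx⟩ := ih
          have hb := Nat.gcd_eq_gcd_ab (n a) (s.gcd n)
          set A : ℤ := Nat.gcdA (n a) (s.gcd n) with hA
          set B : ℤ := Nat.gcdB (n a) (s.gcd n) with hB
          refine ⟨fun i => if i = a then (A : ZMod m) else x i * (B : ZMod m), ?_⟩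
          rw [Finset.sum_insert ha]
          simp only
          have hsum : ∑ i ∈ s, (n i : ZMod m) *
              (if i = a then (A : ZMod m) else x i * (B : ZMod m)) =
              (∑ i ∈ s, (n i : ZMod m) * x i) * (B : ZMod m) := by
            rw [Finset.sum_mul]
            apply Finset.sum_congr rfl
            intro i hi
            rw [if_neg (by rintro rfl; exact ha hi)]
            ring
          rw [if_pos trivial, hsum, hx, Finset.gcd_insert]
          have hcast := congrArg (fun z : ℤ => (z : ZMod m)) hb
          push_cast at hcast
          rw [gcd_eq_nat_gcd, hcast]
      obtain ⟨x, hx⟩ := key Finset.univ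
      exact ⟨x, by rw [hf]; exact hx⟩
  -- cardinalities
  have hcard_range : Nat.card f.range = m / d := by
    rw [hrange, Nat.card_zmultiples, ZMod.addOrderOf_coe _ hm0]
  have hcard_dom : Nat.card (Fin r → ZMod m) = m ^ r := by
    simp [Nat.card_eq_fintype_card, ZMod.card]
  have hiso := Nat.card_congr (QuotientAddGroup.quotientKerEquivRange f).toEquiv
  have htot := AddSubgroup.card_eq_card_quotient_mul_card_addSubgroup f.ker
  rw [hcard_dom, hiso, hcard_range] at htot
  have hker : Nat.card {x : Fin r → ZMod m // ∑ i, (n i : ZMod m) * x i = 0}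
      = Nat.card f.ker := by
    apply Nat.card_congr
    exact Equiv.subtypeEquivRight (fun x => by rw [AddMonoidHom.mem_ker, hf])
  rw [hker]
  have hmd : m / d * d = m := Nat.div_mul_cancel hdm
  have hdpos : 0 < d := Nat.gcd_pos_of_pos_left g hm
  have hpos : 0 < m / d := Nat.div_pos (Nat.le_of_dvd hm hdm) hdpos
  apply Nat.eq_of_mul_eq_mul_left hpos
  rw [← htot]
  calc m ^ r = m ^ (r - 1 + 1) := by rw [Nat.sub_add_cancel hr]
    _ = m ^ (r - 1) * m := pow_succ m (r - 1)
    _ = m ^ (r - 1) * (m / d * d) := by rw [hmd]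
    _ = m / d * (m ^ (r - 1) * d) := by ring
end

section
/- For all positive integers n and m, the Dirichlet convolution identity Σ_{d | n} μ(n/d) · gcd(d, m) = δ_m(n) · ϕ(n) holds; that is, Σ_{d | n} μ(n/d) · gcd(d, m) equals ϕ(n) if n divides m, and equals 0 if n does not divide m. -/
/-- `Σ_{d ∣ n} μ(n/d) · gcd(d, m) = ϕ(n)` if `n ∣ m`, and `0` otherwise. -/
theorem stmt_9 (n m : ℕ) (hn : 1 ≤ n) (hm : 1 ≤ m) :
    ∑ d ∈ n.divisors, (ArithmeticFunction.moebius (n / d)) * (Nat.gcd d m : ℤ) =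
      if n ∣ m then (Nat.totient n : ℤ) else 0 := by
  have key : ∀ k > 0, ∑ i ∈ k.divisors,
      (if i ∣ m then (Nat.totient i : ℤ) else 0) = (Nat.gcd k m : ℤ) := by
    intro k hk
    rw [Finset.sum_ite, Finset.sum_const_zero, add_zero]
    have hset : k.divisors.filter (· ∣ m) = (Nat.gcd k m).divisors := by
      ext i
      simp only [Finset.mem_filter, Nat.mem_divisors, Nat.dvd_gcd_iff]
      constructor
      · rintro ⟨⟨h1, h2⟩, h3⟩; exact ⟨⟨h1, h3⟩, Nat.gcd_ne_zero_left h2⟩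
      · rintro ⟨⟨h1, h3⟩, _⟩; exact ⟨⟨h1, hk.ne'⟩, h3⟩
    rw [hset]
    rw [← Nat.cast_sum]
    norm_cast
    exact Nat.sum_totient _
  have := (ArithmeticFunction.sum_eq_iff_sum_mul_moebius_eq
    (f := fun i => if i ∣ m then (Nat.totient i : ℤ) else 0)
    (g := fun k => (Nat.gcd k m : ℤ))).mp key n hn
  simp only [Int.cast_id] at this
  rw [← this, Nat.sum_divisorsAntidiagonal'
    (f := fun a b => (ArithmeticFunction.moebius a : ℤ) * (Nat.gcd b m : ℤ))]
end

section
/- Let n ≥ 1 be an integer and let q be a prime power with gcd(q, n) = 1. Let X_n(F_q) denote the set of pairs (ψ, φ) where ψ is a monic polynomial of degree n over F_q whose coefficient of z^{n−1} is zero, φ is a polynomial over F_q of degree at most n−1, and Res(ψ, φ) = 1. Then q · |X_n(F_q)| = |Res_n(F_q)|. -/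
open Polynomial

/-- The resultant `Res(φ, ψ)` of a monic polynomial `φ` and a polynomial `ψ`, computed
(inside the algebraic closure) as the product `∏ ψ(αᵢ)` over the roots `αᵢ` of `φ`,
counted with multiplicity. -/
noncomputable def resultantAC {k : Type*} [Field k] (φ ψ : k[X]) : AlgebraicClosure k :=
  (((φ.map (algebraMap k (AlgebraicClosure k))).roots).map
    fun α => (ψ.map (algebraMap k (AlgebraicClosure k))).eval α).prod

/-- `Res_n(k)`: the set of pairs `(φ, ψ)` of monic degree-`n` polynomials over `k`
with `Res(φ, ψ) = 1`. -/
def ResPairs (k : Type*) [Field k] (n : ℕ) : Set (k[X] × k[X]) :=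
  {p | p.1.Monic ∧ p.1.natDegree = n ∧ p.2.Monic ∧ p.2.natDegree = n ∧
    resultantAC p.1 p.2 = 1}

/-- `X_n(k)`: pairs `(ψ, φ)` with `ψ` monic of degree `n` whose coefficient of
`z^{n-1}` vanishes, `φ` of degree at most `n-1`, and `Res(ψ, φ) = 1`. -/
def XPairs (k : Type*) [Field k] (n : ℕ) : Set (k[X] × k[X]) :=
  {p | p.1.Monic ∧ p.1.natDegree = n ∧ p.1.coeff (n - 1) = 0 ∧
    p.2.degree < (n : ℕ) ∧ resultantAC p.1 p.2 = 1}

section Helpers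

variable {k : Type*} [Field k]

/-- Adding the (monic) first argument to the second does not change the resultant. -/
lemma resAC_add {φ : k[X]} (hφ : φ.Monic) (ψ : k[X]) :
    resultantAC φ (ψ + φ) = resultantAC φ ψ := by
  unfold resultantAC
  congr 1
  refine Multiset.map_congr rfl fun α hα => ?_
  have h0 : (φ.map (algebraMap k (AlgebraicClosure k))).eval α = 0 :=
    Polynomial.isRoot_of_mem_roots hα
  simp [Polynomial.map_add, h0]

/-- Translation invariance of the resultant. -/
lemma resAC_comp {φ : k[X]} (hφ : φ.Monic) (ψ : k[X]) (c : k) :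
    resultantAC (φ.comp (X + C c)) (ψ.comp (X + C c)) = resultantAC φ ψ := by
  set σ := algebraMap k (AlgebraicClosure k) with hσ
  set f := φ.map σ with hf
  set g := ψ.map σ with hg
  have hfm : f.Monic := hφ.map σ
  have hmap : (φ.comp (X + C c)).map σ = f.comp (X + C (σ c)) := by
    rw [Polynomial.map_comp]; simp [hf]
  have hmapg : (ψ.comp (X + C c)).map σ = g.comp (X + C (σ c)) := by
    rw [Polynomial.map_comp]; simp [hg]
  have hsplit : f = (Multiset.map (fun a => X - C a) f.roots).prod :=
    (IsAlgClosed.splits f).eq_prod_roots_of_monic hfm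
  have hcomp : f.comp (X + C (σ c)) =
      (Multiset.map (fun a => X - C a) (f.roots.map (fun a => a - σ c))).prod := by
    conv_lhs => rw [hsplit]
    rw [multiset_prod_comp, Multiset.map_map, Multiset.map_map]
    congr 1
    refine Multiset.map_congr rfl fun a _ => ?_
    simp only [Function.comp_apply, sub_comp, add_comp, X_comp, C_comp, map_sub]
    ring
  have hroots : (f.comp (X + C (σ c))).roots = f.roots.map (fun a => a - σ c) := by
    rw [hcomp, roots_multiset_prod_X_sub_C]
  unfold resultantAC
  rw [hmap, hmapg, hroots, Multiset.map_map]
  congr 1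
  refine Multiset.map_congr rfl fun a _ => ?_
  simp only [Function.comp_apply, eval_comp, eval_add, eval_X, eval_C, sub_add_cancel]
  rfl

/-- The coefficient of `z^{n-1}` after the substitution `z ↦ z + c`. -/
lemma coeff_comp_X_add_C {φ : k[X]} {n : ℕ} (hn : 1 ≤ n) (hφ : φ.Monic)
    (hd : φ.natDegree = n) (c : k) :
    (φ.comp (X + C c)).coeff (n - 1) = φ.coeff (n - 1) + n * c := by
  have hcn : φ.coeff n = 1 := by rw [← hd]; exact hφ.coeff_natDegree
  have h1 : hasseDeriv (n - 1) φ = C (φ.coeff (n - 1)) + C (n : k) * X := by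
    ext m
    rw [hasseDeriv_coeff]
    match m with
    | 0 => simp
    | 1 =>
      have h1n : 1 + (n - 1) = n := by omega
      have hch : n.choose (n - 1) = n := by
        rw [← Nat.choose_symm (by omega : n - 1 ≤ n),
          show n - (n - 1) = 1 by omega, Nat.choose_one_right]
      rw [h1n, hch, hcn]
      simp
    | (m+2) =>
      have hz : φ.coeff (m + 2 + (n - 1)) = 0 :=
        coeff_eq_zero_of_natDegree_lt (by omega)
      simp [hz, coeff_C]
  rw [← taylor_apply, taylor_coeff, h1]
  simp

/-- Cancelling two opposite translations. -/
lemma comp_X_add_C_cancel (p : k[X]) (a b : k) (hab : b + a = 0) :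
    (p.comp (X + C a)).comp (X + C b) = p := by
  rw [← taylor_apply, ← taylor_apply, taylor_taylor, hab, taylor_zero]

end Helpers

/-- if `gcd(q, n) = 1` then `q · |X_n(F_q)| = |Res_n(F_q)|`. -/
theorem stmt_13 (F : Type*) [Field F] [Fintype F] (q : ℕ) (hq : Fintype.card F = q)
    (n : ℕ) (hn : 1 ≤ n) (hgcd : Nat.gcd q n = 1) :
    q * Nat.card (XPairs F n) = Nat.card (ResPairs F n) := by
  classical
  -- `n` is invertible in `F`
  have hnF : (n : F) ≠ 0 := by
    intro h
    set p := ringChar F with hp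
    have hc : CharP F p := ringChar.charP F
    obtain ⟨m, hprime, hcard⟩ := FiniteField.card F p
    have hpn : p ∣ n := (CharP.cast_eq_zero_iff F p n).1 h
    have hpq : p ∣ q := by
      rw [← hq, hcard]; exact dvd_pow_self p m.ne_zero
    have h1 : p ∣ 1 := hgcd ▸ Nat.dvd_gcd hpq hpn
    exact hprime.one_lt.ne' (Nat.dvd_one.1 h1)
  -- the forward map `X_n × F → Res_n` and its inverse
  have hT : ∀ (c : F) (x : F[X] × F[X]), x ∈ XPairs F n →
      ((x.1.comp (X + C (-c)), (x.2 + x.1).comp (X + C (-c))) : F[X] × F[X]) ∈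
        ResPairs F n := by
    rintro c ⟨ψ, φ⟩ ⟨hψm, hψd, hψc, hφd, hres⟩
    have hψdeg : ψ.degree = (n : ℕ) := by
      rw [degree_eq_natDegree hψm.ne_zero, hψd]
    have hφψ : φ.degree < ψ.degree := hψdeg ▸ hφd
    have hsum : (φ + ψ).Monic := hψm.add_of_right hφψ
    have hsumd : (φ + ψ).natDegree = n := by
      rw [natDegree_eq_of_degree_eq (degree_add_eq_right_of_degree_lt hφψ), hψd]
    refine ⟨hψm.comp_X_add_C _, ?_, hsum.comp_X_add_C _, ?_, ?_⟩
    · rw [natDegree_comp, natDegree_X_add_C, hψd, mul_one]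
    · rw [natDegree_comp, natDegree_X_add_C, hsumd, mul_one]
    · rw [resAC_comp hψm (φ + ψ) (-c), resAC_add hψm φ, hres]
  have hS : ∀ (x : F[X] × F[X]), x ∈ ResPairs F n →
      ((x.1.comp (X + C (-(x.1.coeff (n - 1)) / n)),
        x.2.comp (X + C (-(x.1.coeff (n - 1)) / n)) -
          x.1.comp (X + C (-(x.1.coeff (n - 1)) / n))) : F[X] × F[X]) ∈ XPairs F n := by
    rintro ⟨φ₁, φ₂⟩ ⟨h1m, h1d, h2m, h2d, hres⟩
    set c : F := -(φ₁.coeff (n - 1)) / n with hc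
    have h1m' : (φ₁.comp (X + C c)).Monic := h1m.comp_X_add_C _
    have h2m' : (φ₂.comp (X + C c)).Monic := h2m.comp_X_add_C _
    have h1d' : (φ₁.comp (X + C c)).natDegree = n := by
      rw [natDegree_comp, natDegree_X_add_C, h1d, mul_one]
    have h2d' : (φ₂.comp (X + C c)).natDegree = n := by
      rw [natDegree_comp, natDegree_X_add_C, h2d, mul_one]
    refine ⟨h1m', h1d', ?_, ?_, ?_⟩
    · rw [coeff_comp_X_add_C hn h1m h1d, hc]
      field_simp
      ring
    · have hlt : (φ₂.comp (X + C c) - φ₁.comp (X + C c)).degree <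
          (φ₂.comp (X + C c)).degree := by
        refine degree_sub_lt ?_ h2m'.ne_zero (by rw [h1m', h2m'])
        rw [degree_eq_natDegree h2m'.ne_zero, degree_eq_natDegree h1m'.ne_zero, h1d', h2d']
      calc (φ₂.comp (X + C c) - φ₁.comp (X + C c)).degree
          < (φ₂.comp (X + C c)).degree := hlt
        _ = (n : ℕ) := by rw [degree_eq_natDegree h2m'.ne_zero, h2d']
    · have : φ₂.comp (X + C c) - φ₁.comp (X + C c) + φ₁.comp (X + C c) =
          φ₂.comp (X + C c) := by ring
      rw [← resAC_add h1m' (φ₂.comp (X + C c) - φ₁.comp (X + C c)), this,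
        resAC_comp h1m φ₂ c, hres]
  -- the bijection
  let e : F × ↥(XPairs F n) ≃ ↥(ResPairs F n) :=
    { toFun := fun x =>
        ⟨((x.2 : F[X] × F[X]).1.comp (X + C (-x.1)),
          ((x.2 : F[X] × F[X]).2 + (x.2 : F[X] × F[X]).1).comp (X + C (-x.1))),
          hT x.1 x.2 x.2.2⟩
      invFun := fun y =>
        (-((y : F[X] × F[X]).1.coeff (n - 1)) / n,
          ⟨((y : F[X] × F[X]).1.comp (X + C (-((y : F[X] × F[X]).1.coeff (n - 1)) / n)),
            (y : F[X] × F[X]).2.comp (X + C (-((y : F[X] × F[X]).1.coeff (n - 1)) / n)) -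
              (y : F[X] × F[X]).1.comp (X + C (-((y : F[X] × F[X]).1.coeff (n - 1)) / n))),
            hS y y.2⟩)
      left_inv := by
        rintro ⟨c, ⟨⟨ψ, φ⟩, hx⟩⟩
        obtain ⟨hψm, hψd, hψc, hφd, hres⟩ := hx
        have hcoeff : (ψ.comp (X + C (-c))).coeff (n - 1) = -(n * c) := by
          rw [coeff_comp_X_add_C hn hψm hψd, hψc]; ring
        have hc' : -((ψ.comp (X + C (-c))).coeff (n - 1)) / n = c := by
          rw [hcoeff]; field_simp
        have hcan : ∀ p : F[X], (p.comp (X + C (-c))).comp (X + C c) = p := fun p =>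
          comp_X_add_C_cancel p (-c) c (by ring)
        refine Prod.ext ?_ (Subtype.ext (Prod.ext ?_ ?_)) <;> simp only [hc', hcan]
        · ring
      right_inv := by
        rintro ⟨⟨φ₁, φ₂⟩, hy⟩
        obtain ⟨h1m, h1d, h2m, h2d, hres⟩ := hy
        set c : F := -(φ₁.coeff (n - 1)) / n with hc
        have hcan : ∀ p : F[X], (p.comp (X + C c)).comp (X + C (-c)) = p := fun p =>
          comp_X_add_C_cancel p c (-c) (by ring)
        refine Subtype.ext (Prod.ext ?_ ?_) <;> simp only
        · exact hcan φ₁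
        · rw [sub_add_cancel, hcan] }
  have hcF : Nat.card F = q := by rw [Nat.card_eq_fintype_card, hq]
  rw [← Nat.card_congr e, Nat.card_prod, hcF]
end

section
/- Let k be a field, let n ≥ 0 and d ≥ 1 be integers, let A be a monic polynomial of degree n over k, let B be a polynomial over k of degree strictly less than n (with B = 0 if n = 0), let P be a monic polynomial of degree d over k, and let a ∈ k^×. Then Res(P·A − a^{−1}·B, a·A) = (−1)^{n·d} · a^d · Res(A, B). -/
open Polynomial

private lemma multiset_prod_swap {K : Type*} [CommMonoid K] (M N : Multiset K)
    (f : K → K → K) :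
    (M.map fun β => (N.map fun α => f β α).prod).prod
      = (N.map fun α => (M.map fun β => f β α).prod).prod := by
  induction M using Multiset.induction with
  | empty => simp
  | cons b M ih => simp [ih, Multiset.prod_map_mul]

/-- for `A` monic of degree `n`, `B` of degree `< n`, `P` monic of degree
`d ≥ 1`, and a unit `a`, one has `Res(P·A - a⁻¹·B, a·A) = (-1)^{nd} · a^d · Res(A, B)`. -/
theorem stmt_15 (k : Type*) [Field k] (n d : ℕ) (hd : 1 ≤ d) (A B P : k[X])
    (hA : A.Monic) (hAn : A.natDegree = n) (hB : B.degree < (n : ℕ))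
    (hP : P.Monic) (hPd : P.natDegree = d) (a : kˣ) :
    resultantAC (P * A - C ((a⁻¹ : kˣ) : k) * B) (C (a : k) * A) =
      (-1) ^ (n * d) * algebraMap k (AlgebraicClosure k) ((a : k) ^ d) *
        resultantAC A B := by
  set K := AlgebraicClosure k with hK
  set f : k →+* K := algebraMap k K with hfdef
  set c : k := ((a⁻¹ : kˣ) : k) with hc
  -- degrees of the original polynomials
  have hPA : (P * A).Monic := hP.mul hA
  have hPAnd : (P * A).natDegree = n + d := by
    rw [hP.natDegree_mul hA, hAn, hPd, Nat.add_comm]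
  have hPAdeg : (P * A).degree = ((n + d : ℕ) : WithBot ℕ) := by
    rw [degree_eq_natDegree hPA.ne_zero, hPAnd]
  have hlt : (C c * B).degree < (P * A).degree := by
    calc (C c * B).degree ≤ degree (C c) + B.degree := degree_mul_le _ _
      _ ≤ 0 + B.degree := add_le_add degree_C_le le_rfl
      _ = B.degree := by rw [zero_add]
      _ < ((n : ℕ) : WithBot ℕ) := hB
      _ ≤ ((n + d : ℕ) : WithBot ℕ) := by exact_mod_cast Nat.le_add_right n d
      _ = (P * A).degree := hPAdeg.symm
  have hφm : (P * A - C c * B).Monic := by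
    rw [sub_eq_add_neg]
    exact hPA.add_of_left (by rwa [degree_neg])
  have hφnd : (P * A - C c * B).natDegree = n + d := by
    have h := (degree_sub_eq_left_of_degree_lt hlt).trans hPAdeg
    exact natDegree_eq_of_degree_eq_some h
  -- mapped polynomials
  set φ : K[X] := (P * A - C c * B).map f with hφdef
  set Aa : K[X] := A.map f with hAadef
  set Bb : K[X] := B.map f with hBbdef
  set Mφ : Multiset K := φ.roots with hMφ
  set MA : Multiset K := Aa.roots with hMA
  have hAam : Aa.Monic := hA.map f
  have hφmm : φ.Monic := hφm.map f
  have hMφcard : Multiset.card Mφ = n + d := by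
    rw [hMφ, splits_iff_card_roots.mp (IsAlgClosed.splits φ), hφdef,
      natDegree_map, hφnd]
  have hMAcard : Multiset.card MA = n := by
    rw [hMA, splits_iff_card_roots.mp (IsAlgClosed.splits Aa), hAadef,
      natDegree_map, hAn]
  have hAeq : Aa = (MA.map fun α => X - C α).prod :=
    (IsAlgClosed.splits Aa).eq_prod_roots_of_monic hAam
  have hφeq : φ = (Mφ.map fun β => X - C β).prod :=
    (IsAlgClosed.splits φ).eq_prod_roots_of_monic hφmm
  have hevalA : ∀ β : K, Aa.eval β = (MA.map fun α => β - α).prod := by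
    intro β
    conv_lhs => rw [hAeq]
    rw [eval_multiset_prod, Multiset.map_map]
    simp
  have hevalφ : ∀ β : K, φ.eval β = (Mφ.map fun γ => β - γ).prod := by
    intro β
    conv_lhs => rw [hφeq]
    rw [eval_multiset_prod, Multiset.map_map]
    simp
  -- value of φ at a root of A
  have hφroot : ∀ α ∈ MA, φ.eval α = -(f c * Bb.eval α) := by
    intro α hα
    have hz : Aa.eval α = 0 := isRoot_of_mem_roots hα
    rw [hφdef, Polynomial.map_sub, Polynomial.map_mul, Polynomial.map_mul,
      Polynomial.map_C]
    rw [eval_sub, eval_mul, eval_mul, eval_C]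
    rw [show A.map f = Aa from rfl, show B.map f = Bb from rfl, hz]
    ring
  have hfac : f (↑a : k) * f c = 1 := by
    rw [← map_mul, hc, Units.mul_inv, map_one]
  set R : K := resultantAC A B with hR
  have hRdef : R = (MA.map fun α => Bb.eval α).prod := rfl
  -- main computation
  have main : resultantAC (P * A - C c * B) (C (↑a : k) * A) =
      (f (↑a : k)) ^ (n + d) * ((((-1 : K) ^ (n + d)) ^ n)
        * ((-1 : K) ^ n * ((f c) ^ n * R))) := by
    show (Mφ.map fun β => ((C (↑a : k) * A).map f).eval β).prod = _
    have h1 : (Mφ.map fun β => ((C (↑a : k) * A).map f).eval β)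
        = Mφ.map fun β => f (↑a : k) * Aa.eval β := by
      apply Multiset.map_congr rfl
      intro β _
      rw [Polynomial.map_mul, Polynomial.map_C, eval_mul, eval_C]
    rw [h1, Multiset.prod_map_mul]
    have h2 : (Mφ.map fun _ => f (↑a : k)).prod = (f (↑a : k)) ^ (n + d) := by
      rw [Multiset.map_const', Multiset.prod_replicate, hMφcard]
    rw [h2]
    congr 1
    calc (Mφ.map fun β => Aa.eval β).prod
        = (Mφ.map fun β => (MA.map fun α => β - α).prod).prod := by
          apply congrArg
          exact Multiset.map_congr rfl fun β _ => hevalA β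
      _ = (MA.map fun α => (Mφ.map fun β => β - α).prod).prod :=
          multiset_prod_swap Mφ MA (fun β α => β - α)
      _ = (MA.map fun α => ((-1 : K) ^ (n + d)) * ((-1 : K) * (f c * Bb.eval α))).prod := by
          apply congrArg
          apply Multiset.map_congr rfl
          intro α hα
          have : (Mφ.map fun β => β - α) = Mφ.map fun β => (-1 : K) * (α - β) := by
            apply Multiset.map_congr rfl
            intro β _
            ring
          rw [this, Multiset.prod_map_mul, Multiset.map_const', Multiset.prod_replicate,
            hMφcard]
          have := hevalφ α
          rw [← this, hφroot α hα]
          ring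
      _ = ((-1 : K) ^ (n + d)) ^ n * ((-1 : K) ^ n * ((f c) ^ n * R)) := by
          rw [Multiset.prod_map_mul, Multiset.prod_map_mul, Multiset.prod_map_mul,
            Multiset.map_const', Multiset.map_const', Multiset.map_const',
            Multiset.prod_replicate, Multiset.prod_replicate, Multiset.prod_replicate,
            hMAcard, hRdef]
  -- final constant arithmetic
  have hpow : (f (↑a : k)) ^ (n + d) * (f c) ^ n = (f (↑a : k)) ^ d := by
    calc (f (↑a : k)) ^ (n + d) * (f c) ^ n
        = (f (↑a : k)) ^ d * (f (↑a : k) * f c) ^ n := by rw [mul_pow, pow_add]; ring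
      _ = (f (↑a : k)) ^ d := by rw [hfac, one_pow, mul_one]
  have hsign : (((-1 : K)) ^ (n + d)) ^ n * (-1 : K) ^ n = (-1 : K) ^ (n * d) := by
    rw [← pow_mul, ← pow_add]
    obtain ⟨m, hm⟩ := Nat.even_mul_succ_self n
    have h1 : (n + d) * n + n = n * d + (m + m) := by
      have hm' : n * n + n = m + m := by rw [← hm]; ring
      calc (n + d) * n + n = n * d + (n * n + n) := by ring
        _ = n * d + (m + m) := by rw [hm']
    rw [h1, pow_add, Even.neg_one_pow ⟨m, rfl⟩, mul_one]
  rw [main, map_pow]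
  calc (f (↑a : k)) ^ (n + d) * ((((-1 : K) ^ (n + d)) ^ n)
        * ((-1 : K) ^ n * ((f c) ^ n * R)))
      = ((f (↑a : k)) ^ (n + d) * (f c) ^ n)
          * ((((-1 : K)) ^ (n + d)) ^ n * (-1 : K) ^ n) * R := by ring
    _ = (-1 : K) ^ (n * d) * (f (↑a : k)) ^ d * R := by rw [hpow, hsign]; ring
end
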